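/- The intertwiner space C := C_{B'}(B(G,H)) is self-dual: for every linear map Φ : C → B(G) with Φ(x) ∈ B for all x ∈ C, Φ(x ∘ b) = Φ(x) ∘ b for all x ∈ C and b ∈ B, and which is bounded for the operator norms, there exists y ∈ C such that Φ(x) = y* ∘ x for all x ∈ C. -/

import Mathlib

set_option maxHeartbeats 4000000
set_option synthInstance.maxHeartbeats 400000

open ContinuousLinearMap
open scoped ComplexInnerProductSpace

/-- A set of bounded operators is closed in the strong operator topology, i.e. the
topology of pointwise norm convergence: every bounded operator lying in the closure of
the set inside `G → H` (with the product topology of the norm topologies) belongs to it. -/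
def SOTClosed {G H : Type*} [NormedAddCommGroup G] [InnerProductSpace ℂ G]
    [NormedAddCommGroup H] [InnerProductSpace ℂ H] (E : Set (G →L[ℂ] H)) : Prop :=
  ∀ T : G →L[ℂ] H, ⇑T ∈ closure ((fun S : G →L[ℂ] H => ⇑S) '' E) → T ∈ E

/-- The intertwiner space `{x ∈ B(G,H) : ρ(b') ∘ x = x ∘ b' for all b' ∈ S}`,
as a linear subspace of `B(G,H)`. -/
def intertwinerSubmodule {G H : Type*}
    [NormedAddCommGroup G] [InnerProductSpace ℂ G]
    [NormedAddCommGroup H] [InnerProductSpace ℂ H]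
    (S : Set (G →L[ℂ] G)) (ρ : (G →L[ℂ] G) → (H →L[ℂ] H)) :
    Submodule ℂ (G →L[ℂ] H) where
  carrier := {x : G →L[ℂ] H | ∀ b' ∈ S, (ρ b').comp x = x.comp b'}
  zero_mem' := by intro b' _; simp
  add_mem' := by
    intro x y hx hy b' hb'
    simp only [ContinuousLinearMap.comp_add, ContinuousLinearMap.add_comp,
      hx b' hb', hy b' hb']
  smul_mem' := by
    intro c x hx b' hb'
    simp only [ContinuousLinearMap.comp_smulₛₗ, ContinuousLinearMap.smul_comp,
      RingHom.id_apply, hx b' hb']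

instance piLpCompleteSpace {ι : Type*} [Fintype ι] {β : ι → Type*}
    [∀ i, NormedAddCommGroup (β i)] [∀ i, CompleteSpace (β i)] :
    CompleteSpace (PiLp 2 β) := by
  infer_instance

noncomputable instance intertwinerSubmodule.instNormedAddCommGroup {G H : Type*}
    [NormedAddCommGroup G] [InnerProductSpace ℂ G]
    [NormedAddCommGroup H] [InnerProductSpace ℂ H]
    (S : Set (G →L[ℂ] G)) (ρ : (G →L[ℂ] G) → (H →L[ℂ] H)) :
    NormedAddCommGroup ↥(intertwinerSubmodule S ρ) := inferInstance

noncomputable instance intertwinerSubmodule.instNormedSpace {G H : Type*}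
    [NormedAddCommGroup G] [InnerProductSpace ℂ G]
    [NormedAddCommGroup H] [InnerProductSpace ℂ H]
    (S : Set (G →L[ℂ] G)) (ρ : (G →L[ℂ] G) → (H →L[ℂ] H)) :
    NormedSpace ℂ ↥(intertwinerSubmodule S ρ) := inferInstance

lemma exists_inverse {V : Type*} [NormedAddCommGroup V] [InnerProductSpace ℂ V]
    [CompleteSpace V] (T : V →L[ℂ] V) (ε : ℝ) (hε : 0 < ε)
    (hco : ∀ u, ε * ‖u‖ ^ 2 ≤ (⟪T u, u⟫).re) :
    ∃ S : V →L[ℂ] V, T.comp S = ContinuousLinearMap.id ℂ V ∧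
      S.comp T = ContinuousLinearMap.id ℂ V := by
  have hlow : ∀ u, ε * ‖u‖ ≤ ‖T u‖ := by
    intro u
    rcases eq_or_lt_of_le (norm_nonneg u) with h0 | h0
    · simp [← h0]
    · have h1 : ε * ‖u‖ ^ 2 ≤ ‖T u‖ * ‖u‖ := by
        refine (hco u).trans ?_
        calc (⟪T u, u⟫).re ≤ ‖⟪T u, u⟫‖ := Complex.re_le_norm _
          _ ≤ ‖T u‖ * ‖u‖ := norm_inner_le_norm _ _
      nlinarith
  have hinj : LinearMap.ker (T : V →ₗ[ℂ] V) = ⊥ := by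
    refine (Submodule.eq_bot_iff _).mpr fun u hu => ?_
    rw [LinearMap.mem_ker, ContinuousLinearMap.coe_coe] at hu
    have h1 := hlow u
    rw [hu, norm_zero] at h1
    have h2 : ‖u‖ ≤ 0 := by nlinarith [norm_nonneg u]
    have := le_antisymm h2 (norm_nonneg _)
    rwa [norm_eq_zero] at this
  have hanti : AntilipschitzWith (Real.toNNReal ε)⁻¹ T := by
    refine T.antilipschitz_of_bound fun u => ?_
    rw [NNReal.coe_inv, Real.coe_toNNReal _ hε.le]
    rw [inv_mul_eq_div, le_div_iff₀ hε]
    linarith [hlow u]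
  have hclosed : IsClosed (Set.range T) := hanti.isClosed_range T.uniformContinuous
  have hrc : IsClosed ((LinearMap.range (T : V →ₗ[ℂ] V) : Submodule ℂ V) : Set V) := by
    rwa [LinearMap.coe_range, ContinuousLinearMap.coe_coe]
  haveI : CompleteSpace (LinearMap.range (T : V →ₗ[ℂ] V) : Submodule ℂ V) := hrc.completeSpace_coe
  have hsurj : LinearMap.range (T : V →ₗ[ℂ] V) = ⊤ := by
    rw [← Submodule.orthogonal_eq_bot_iff]
    refine (Submodule.eq_bot_iff _).mpr fun u hu => ?_
    rw [Submodule.mem_orthogonal] at hu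
    have h1 : ⟪T u, u⟫ = 0 := hu (T u) (LinearMap.mem_range_self _ u)
    have h2 := hco u
    rw [h1] at h2
    simp only [Complex.zero_re] at h2
    by_contra hne
    have hpos : 0 < ‖u‖ := norm_pos_iff.mpr hne
    nlinarith [mul_pos hε (pow_pos hpos 2)]
  let e := ContinuousLinearEquiv.ofBijective T hinj hsurj
  refine ⟨e.symm.toContinuousLinearMap, ?_, ?_⟩
  · ext v
    have : T (e.symm v) = e (e.symm v) := rfl
    simp [this, e.apply_symm_apply]
  · ext v
    have : e.symm (T v) = e.symm (e v) := rfl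
    simp [this, e.symm_apply_apply]

lemma approx_lemma {G H : Type*}
    [NormedAddCommGroup G] [InnerProductSpace ℂ G] [CompleteSpace G]
    [NormedAddCommGroup H] [InnerProductSpace ℂ H] [CompleteSpace H]
    (S : Set (G →L[ℂ] G)) (ρ' : (G →L[ℂ] G) → (H →L[ℂ] H))
    (memB : (G →L[ℂ] G) → Prop)
    (hmemB : ∀ w : G →L[ℂ] G, (∀ b' ∈ S, ∀ g : G, b' (w g) = w (b' g)) → memB w)
    (hBcomm : ∀ b : G →L[ℂ] G, memB b → ∀ b' ∈ S, ∀ g : G, b (b' g) = b' (b g))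
    (hstarB : ∀ b : G →L[ℂ] G, memB b → memB (adjoint b))
    (hstarS : ∀ b' ∈ S, adjoint b' ∈ S)
    (hρadj : ∀ b' ∈ S, adjoint (ρ' b') = ρ' (adjoint b'))
    (Φ : ↥(intertwinerSubmodule S ρ') →L[ℂ] (G →L[ℂ] G))
    (hΦB : ∀ x, memB (Φ x))
    (hΦmod : ∀ (x : G →L[ℂ] H) (hx : x ∈ intertwinerSubmodule S ρ')
      (b : G →L[ℂ] G), memB b → ∀ (hxb : x.comp b ∈ intertwinerSubmodule S ρ'),
      Φ ⟨x.comp b, hxb⟩ = (Φ ⟨x, hx⟩).comp b)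
    {ι : Type*} [Fintype ι] [DecidableEq ι]
    (xs : ι → ↥(intertwinerSubmodule S ρ'))
    (ε : ℝ) (hε : 0 < ε) :
    ∃ y : G →L[ℂ] H, y ∈ intertwinerSubmodule S ρ' ∧ ‖y‖ ≤ ‖Φ‖ ∧
      ∀ (i : ι) (g g' : G),
        ‖⟪y g', (xs i).1 g⟫ - ⟪g', Φ (xs i) g⟫‖ ≤ Real.sqrt ε * ‖Φ‖ * ‖g‖ * ‖g'‖ := by
  classical
  have hmemCp : ∀ z ∈ intertwinerSubmodule S ρ', ∀ b' ∈ S, ∀ g, ρ' b' (z g) = z (b' g) := by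
    intro z hz b' hb' g
    have := congrArg (fun T : G →L[ℂ] H => T g) (hz b' hb')
    simpa [ContinuousLinearMap.comp_apply] using this
  have hCB : ∀ z ∈ intertwinerSubmodule S ρ', ∀ b : G →L[ℂ] G, memB b →
      z.comp b ∈ intertwinerSubmodule S ρ' := by
    intro z hz b hb b' hb'
    ext g
    have h1 := congrArg (fun T : G →L[ℂ] H => T (b g)) (hz b' hb')
    simp only [ContinuousLinearMap.comp_apply] at h1 ⊢
    rw [h1, hBcomm b hb b' hb' g]
  -- the column Hilbert space
  let pr : ∀ _ : ι, (PiLp 2 fun _ : ι => G) →L[ℂ] G := fun i => PiLp.proj 2 (fun _ : ι => G) i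
  let col : (ι → (G →L[ℂ] G)) → (G →L[ℂ] PiLp 2 fun _ : ι => G) := fun f =>
    (PiLp.continuousLinearEquiv 2 ℂ (fun _ : ι => G)).symm.toContinuousLinearMap.comp
      (ContinuousLinearMap.pi f)
  let diag : (G →L[ℂ] G) → ((PiLp 2 fun _ : ι => G) →L[ℂ] PiLp 2 fun _ : ι => G) := fun b =>
    (PiLp.continuousLinearEquiv 2 ℂ (fun _ : ι => G)).symm.toContinuousLinearMap.comp
      (ContinuousLinearMap.pi fun i => b.comp (pr i))
  have hcol : ∀ f (g : G) i, col f g i = f i g := fun f g i => rfl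
  have hpr : ∀ (u : PiLp 2 fun _ : ι => G) i, pr i u = u i := fun u i => rfl
  have hdiag : ∀ b (u : PiLp 2 fun _ : ι => G) i, diag b u i = b (u i) := fun b u i => rfl
  let X : (PiLp 2 fun _ : ι => G) →L[ℂ] H := ∑ i : ι, ((xs i).1).comp (pr i)
  have hXapp : ∀ u : PiLp 2 fun _ : ι => G, X u = ∑ i : ι, (xs i).1 (u i) := by
    intro u
    simp only [X, ContinuousLinearMap.sum_apply, ContinuousLinearMap.comp_apply, hpr]
  let d : G →L[ℂ] PiLp 2 fun _ : ι => G := col fun i => adjoint (Φ (xs i))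
  let e : (PiLp 2 fun _ : ι => G) →L[ℂ] G := ∑ i : ι, (Φ (xs i)).comp (pr i)
  have heapp : ∀ u : PiLp 2 fun _ : ι => G, e u = ∑ i : ι, (Φ (xs i)) (u i) := by
    intro u
    simp only [e, ContinuousLinearMap.sum_apply, ContinuousLinearMap.comp_apply, hpr]
  let A : (PiLp 2 fun _ : ι => G) →L[ℂ] PiLp 2 fun _ : ι => G :=
    (adjoint X).comp X + (ε : ℂ) • ContinuousLinearMap.id ℂ (PiLp 2 fun _ : ι => G)
  have hAapp : ∀ u, A u = adjoint X (X u) + (ε : ℂ) • u := fun u => rfl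
  have hA_re : ∀ u : PiLp 2 fun _ : ι => G, (⟪A u, u⟫).re = ‖X u‖ ^ 2 + ε * ‖u‖ ^ 2 := by
    intro u
    rw [hAapp, inner_add_left, inner_smul_left, adjoint_inner_left,
      inner_self_eq_norm_sq_to_K (𝕜 := ℂ), inner_self_eq_norm_sq_to_K (𝕜 := ℂ)]
    simp [Complex.conj_ofReal, ← Complex.ofReal_pow]
  have hA_co : ∀ u : PiLp 2 fun _ : ι => G, ε * ‖u‖ ^ 2 ≤ (⟪A u, u⟫).re := by
    intro u
    rw [hA_re u]
    nlinarith [sq_nonneg ‖X u‖]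
  have hA_sa : ∀ u v : PiLp 2 fun _ : ι => G, ⟪A u, v⟫ = ⟪u, A v⟫ := by
    intro u v
    rw [hAapp, hAapp, inner_add_left, inner_add_right, inner_smul_left, inner_smul_right,
      adjoint_inner_left, adjoint_inner_right]
    simp [Complex.conj_ofReal]
  obtain ⟨A', hAA', hA'A⟩ := exists_inverse A ε hε hA_co
  have hApply : ∀ v, A (A' v) = v := by
    intro v
    have := congrArg (fun T : (PiLp 2 fun _ : ι => G) →L[ℂ] PiLp 2 fun _ : ι => G => T v) hAA'
    simpa using this
  have hApply' : ∀ v, A' (A v) = v := by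
    intro v
    have := congrArg (fun T : (PiLp 2 fun _ : ι => G) →L[ℂ] PiLp 2 fun _ : ι => G => T v) hA'A
    simpa using this
  -- commutation facts
  have hXdiagp : ∀ b' ∈ S, ∀ u, X (diag b' u) = ρ' b' (X u) := by
    intro b' hb' u
    rw [hXapp, hXapp, map_sum]
    refine Finset.sum_congr rfl fun i _ => ?_
    rw [hdiag]
    exact (hmemCp (xs i).1 (xs i).2 b' hb' (u i)).symm
  have hdiag_inner : ∀ (b : G →L[ℂ] G) (u v : PiLp 2 fun _ : ι => G),
      ⟪diag b u, v⟫ = ⟪u, diag (adjoint b) v⟫ := by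
    intro b u v
    rw [PiLp.inner_apply, PiLp.inner_apply]
    refine Finset.sum_congr rfl fun i _ => ?_
    rw [hdiag, hdiag, adjoint_inner_right]
  have hXadjp : ∀ b' ∈ S, ∀ h : H,
      diag b' (adjoint X h) = adjoint X (ρ' b' h) := by
    intro b' hb' h
    apply ext_inner_left ℂ
    intro v
    calc ⟪v, diag b' (adjoint X h)⟫
        = ⟪diag (adjoint b') v, adjoint X h⟫ := by
          rw [hdiag_inner (adjoint b') v (adjoint X h), adjoint_adjoint]
      _ = ⟪X (diag (adjoint b') v), h⟫ := by rw [adjoint_inner_right]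
      _ = ⟪ρ' (adjoint b') (X v), h⟫ := by rw [hXdiagp _ (hstarS b' hb') v]
      _ = ⟪X v, adjoint (ρ' (adjoint b')) h⟫ := by rw [← adjoint_inner_right]
      _ = ⟪X v, ρ' b' h⟫ := by
          rw [hρadj _ (hstarS b' hb'), adjoint_adjoint]
      _ = ⟪v, adjoint X (ρ' b' h)⟫ := by rw [adjoint_inner_right]
  have hAdiagp : ∀ b' ∈ S, ∀ u, A (diag b' u) = diag b' (A u) := by
    intro b' hb' u
    rw [hAapp, hAapp, hXdiagp b' hb' u, ← hXadjp b' hb' (X u), map_add, map_smul]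
  have hA'diagp : ∀ b' ∈ S, ∀ u, A' (diag b' u) = diag b' (A' u) := by
    intro b' hb' u
    conv_lhs => rw [← hApply u]
    rw [← hAdiagp b' hb' (A' u), hApply']
  have hdiagd : ∀ b' ∈ S, ∀ g : G, diag b' (d g) = d (b' g) := by
    intro b' hb' g
    refine PiLp.ext fun i => ?_
    rw [hdiag]
    show b' (adjoint (Φ (xs i)) g) = adjoint (Φ (xs i)) (b' g)
    exact (hBcomm _ (hstarB _ (hΦB (xs i))) b' hb' g).symm
  -- the coefficients are in B
  have hciB : ∀ i : ι, memB ((pr i).comp (A'.comp d)) := by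
    intro i
    refine hmemB _ fun b' hb' g => ?_
    show b' (pr i (A' (d g))) = pr i (A' (d (b' g)))
    rw [← hdiagd b' hb' g, hA'diagp b' hb' (d g)]
    rfl
  -- the approximant
  set y : G →L[ℂ] H := X.comp (A'.comp d) with hy_def
  have hy_app : ∀ g : G, y g = X (A' (d g)) := fun g => rfl
  have hyC : y ∈ intertwinerSubmodule S ρ' := by
    intro b' hb'
    ext g
    show ρ' b' (y g) = y (b' g)
    rw [hy_app, hy_app, ← hXdiagp b' hb' (A' (d g)), ← hA'diagp b' hb' (d g), hdiagd b' hb' g]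
  -- Φ applied to the approximant
  have hy_sum : (⟨y, hyC⟩ : ↥(intertwinerSubmodule S ρ')) =
      ∑ i : ι, ⟨((xs i).1).comp ((pr i).comp (A'.comp d)),
        hCB _ (xs i).2 _ (hciB i)⟩ := by
    apply Subtype.ext
    rw [Submodule.coe_sum]
    ext g
    rw [ContinuousLinearMap.sum_apply]
    show X (A' (d g)) = _
    rw [hXapp]
    rfl
  have hΦy : Φ ⟨y, hyC⟩ = e.comp (A'.comp d) := by
    rw [hy_sum, map_sum]
    have h1 : ∀ i : ι, Φ ⟨((xs i).1).comp ((pr i).comp (A'.comp d)),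
        hCB _ (xs i).2 _ (hciB i)⟩ = (Φ (xs i)).comp ((pr i).comp (A'.comp d)) := by
      intro i
      rw [hΦmod (xs i).1 (xs i).2 _ (hciB i)]
    rw [Finset.sum_congr rfl fun i _ => h1 i]
    ext g
    rw [ContinuousLinearMap.sum_apply]
    show _ = e (A' (d g))
    rw [heapp]
    rfl
  -- inner product identities
  have hRinner : ∀ g' : G, ⟪e (A' (d g')) , g'⟫ = ⟪A' (d g'), d g'⟫ := by
    intro g'
    rw [heapp, PiLp.inner_apply]
    rw [sum_inner]
    refine Finset.sum_congr rfl fun i _ => ?_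
    rw [← adjoint_inner_right]
    rfl
  have hRbound : ∀ g' : G, (⟪A' (d g'), d g'⟫).re ≤ ‖e.comp (A'.comp d)‖ * ‖g'‖ ^ 2 := by
    intro g'
    rw [← hRinner g']
    have h1 : ‖⟪e (A' (d g')), g'⟫‖ ≤ ‖e (A' (d g'))‖ * ‖g'‖ := norm_inner_le_norm _ _
    have h2 : ‖e (A' (d g'))‖ ≤ ‖e.comp (A'.comp d)‖ * ‖g'‖ := by
      have := (e.comp (A'.comp d)).le_opNorm g'
      simpa using this
    calc (⟪e (A' (d g')), g'⟫).re ≤ ‖⟪e (A' (d g')), g'⟫‖ :=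
          Complex.re_le_norm _
      _ ≤ ‖e (A' (d g'))‖ * ‖g'‖ := norm_inner_le_norm _ _
      _ ≤ (‖e.comp (A'.comp d)‖ * ‖g'‖) * ‖g'‖ :=
          mul_le_mul_of_nonneg_right h2 (norm_nonneg g')
      _ = ‖e.comp (A'.comp d)‖ * ‖g'‖ ^ 2 := by ring
  have hmain : ∀ g' : G, ‖X (A' (d g'))‖ ^ 2 + ε * ‖A' (d g')‖ ^ 2
      = (⟪A' (d g'), d g'⟫).re := by
    intro g'
    rw [← hA_re (A' (d g'))]
    have h1 : ⟪A (A' (d g')), A' (d g')⟫ = ⟪d g', A' (d g')⟫ := by rw [hApply (d g')]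
    rw [h1, ← inner_conj_symm, Complex.conj_re]
  -- norm bounds
  have hynorm : ‖y‖ ≤ Real.sqrt ‖e.comp (A'.comp d)‖ := by
    refine y.opNorm_le_bound (Real.sqrt_nonneg _) fun g' => ?_
    have h2 : ‖y g'‖ ^ 2 ≤ ‖e.comp (A'.comp d)‖ * ‖g'‖ ^ 2 := by
      rw [hy_app]
      have h3 := hmain g'
      have h4 := hRbound g'
      have h5 : 0 ≤ ε * ‖A' (d g')‖ ^ 2 := by positivity
      linarith
    have h6 := Real.sqrt_le_sqrt h2
    rwa [Real.sqrt_sq (norm_nonneg _), Real.sqrt_mul (norm_nonneg _) _,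
      Real.sqrt_sq (norm_nonneg g')] at h6
  have hy2R : ‖y‖ ^ 2 ≤ ‖e.comp (A'.comp d)‖ := by
    have h7 := Real.sq_sqrt (norm_nonneg (e.comp (A'.comp d)))
    nlinarith [Real.sqrt_nonneg ‖e.comp (A'.comp d)‖, norm_nonneg y]
  have hRΦy : ‖e.comp (A'.comp d)‖ ≤ ‖Φ‖ * ‖y‖ := by
    rw [← hΦy]
    have h8 := Φ.le_opNorm ⟨y, hyC⟩
    simpa using h8
  have hΦnn : (0:ℝ) ≤ ‖Φ‖ := ContinuousLinearMap.opNorm_nonneg Φ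
  have hyΦ : ‖y‖ ≤ ‖Φ‖ := by
    rcases eq_or_lt_of_le (norm_nonneg y) with h0 | h0
    · rw [← h0]; exact hΦnn
    · nlinarith
  have hRΦ2 : ‖e.comp (A'.comp d)‖ ≤ ‖Φ‖ ^ 2 := by nlinarith
  refine ⟨y, hyC, hyΦ, ?_⟩
  intro i g g'
  set w : PiLp 2 (fun _ : ι => G) :=
    (PiLp.continuousLinearEquiv 2 ℂ (fun _ : ι => G)).symm (Pi.single i g) with hw_def
  have hw : ∀ j, w j = Pi.single (M := fun _ : ι => G) i g j := fun j => rfl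
  have hXw : X w = (xs i).1 g := by
    rw [hXapp, Fintype.sum_eq_single i ?_]
    · rw [hw, Pi.single_eq_same]
    · intro j hj
      rw [hw, Pi.single_eq_of_ne hj, map_zero]
  set u : PiLp 2 (fun _ : ι => G) := A' (d g') with hu_def
  have h1 : ⟪y g', (xs i).1 g⟫ = ⟪u, A w⟫ - (ε:ℂ) * ⟪u, w⟫ := by
    rw [hy_app, ← hXw, ← adjoint_inner_right]
    have h9 : adjoint X (X w) = A w - (ε:ℂ) • w := by
      rw [hAapp]; abel
    rw [h9, inner_sub_right, inner_smul_right]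
  have h2 : ⟪u, A w⟫ = ⟪g', Φ (xs i) g⟫ := by
    rw [← hA_sa u w, hu_def, hApply (d g'), PiLp.inner_apply,
      Fintype.sum_eq_single i ?_]
    · show ⟪adjoint (Φ (xs i)) g', w i⟫ = _
      rw [hw, Pi.single_eq_same, adjoint_inner_left]
    · intro j hj
      show ⟪adjoint (Φ (xs j)) g', w j⟫ = 0
      rw [hw, Pi.single_eq_of_ne hj, inner_zero_right]
  have h3 : ⟪u, w⟫ = ⟪u i, g⟫ := by
    rw [PiLp.inner_apply, Fintype.sum_eq_single i ?_]
    · rw [hw, Pi.single_eq_same]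
    · intro j hj; rw [hw, Pi.single_eq_of_ne hj, inner_zero_right]
  have hub : ε * ‖u‖ ^ 2 ≤ ‖Φ‖ ^ 2 * ‖g'‖ ^ 2 := by
    have h10 := hmain g'
    have h11 := hRbound g'
    nlinarith [sq_nonneg ‖X (A' (d g'))‖, sq_nonneg ‖g'‖,
      mul_le_mul_of_nonneg_right hRΦ2 (sq_nonneg ‖g'‖)]
  have h5 : ‖⟪y g', (xs i).1 g⟫ - ⟪g', Φ (xs i) g⟫‖ = ε * ‖⟪u, w⟫‖ := by
    have h12 : ⟪u, A w⟫ - (ε:ℂ) * ⟪u, w⟫ - ⟪g', Φ (xs i) g⟫ = -((ε:ℂ) * ⟪u, w⟫) := by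
      rw [h2]; ring
    rw [h1, h12, norm_neg, norm_mul]
    congr 1
    rw [Complex.norm_real]
    exact abs_of_pos hε
  have hui : ‖u i‖ ≤ ‖u‖ := by
    have h13 : ‖u i‖ ^ 2 ≤ ‖u‖ ^ 2 := by
      rw [PiLp.norm_sq_eq_of_L2]
      exact Finset.single_le_sum (f := fun j => ‖u j‖ ^ 2)
        (fun j _ => sq_nonneg ‖u j‖) (Finset.mem_univ i)
    exact le_of_pow_le_pow_left₀ two_ne_zero (norm_nonneg u) h13
  have h6 : ε * ‖u‖ ≤ Real.sqrt ε * (‖Φ‖ * ‖g'‖) := by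
    have h7 : Real.sqrt ε ^ 2 = ε := Real.sq_sqrt hε.le
    have hsq : (ε * ‖u‖) ^ 2 ≤ (Real.sqrt ε * (‖Φ‖ * ‖g'‖)) ^ 2 := by
      nlinarith [h7, mul_le_mul_of_nonneg_left hub hε.le, hε.le, norm_nonneg u]
    have h8 : (0:ℝ) ≤ Real.sqrt ε * (‖Φ‖ * ‖g'‖) := by positivity
    exact le_of_pow_le_pow_left₀ two_ne_zero h8 hsq
  calc ‖⟪y g', (xs i).1 g⟫ - ⟪g', Φ (xs i) g⟫‖ = ε * ‖⟪u, w⟫‖ := h5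
    _ ≤ ε * (‖u‖ * ‖g‖) := by
        rw [h3]
        refine mul_le_mul_of_nonneg_left ?_ hε.le
        calc ‖⟪u i, g⟫‖ ≤ ‖u i‖ * ‖g‖ := norm_inner_le_norm _ _
          _ ≤ ‖u‖ * ‖g‖ := mul_le_mul_of_nonneg_right hui (norm_nonneg g)
    _ = (ε * ‖u‖) * ‖g‖ := by ring
    _ ≤ (Real.sqrt ε * (‖Φ‖ * ‖g'‖)) * ‖g‖ := mul_le_mul_of_nonneg_right h6 (norm_nonneg g)
    _ = Real.sqrt ε * ‖Φ‖ * ‖g‖ * ‖g'‖ := by ring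

/-- The intertwiner space `C_{B'}(B(G,H))` is self-dual: every `B`-functional on it is
of the form `x ↦ y* ∘ x` for some `y` in the intertwiner space. -/
theorem intertwiner_space_selfDual
    {G H : Type*}
    [NormedAddCommGroup G] [InnerProductSpace ℂ G] [CompleteSpace G]
    [NormedAddCommGroup H] [InnerProductSpace ℂ H] [CompleteSpace H]
    (B : VonNeumannAlgebra G)
    (E : Submodule ℂ (G →L[ℂ] H))
    (hE1 : ∀ x ∈ E, ∀ y ∈ E, (adjoint x).comp y ∈ B)
    (hE2 : ∀ x ∈ E, ∀ b ∈ B, x.comp b ∈ E)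
    (hE3 : SOTClosed (E : Set (G →L[ℂ] H)))
    (hE4 : Dense (Submodule.span ℂ {h : H | ∃ x ∈ E, ∃ g : G, x g = h} : Set H))
    (ρ' : (G →L[ℂ] G) → (H →L[ℂ] H))
    (hρ_one : ρ' 1 = 1)
    (hρ_mul : ∀ a ∈ B.commutant, ∀ b ∈ B.commutant, ρ' (a * b) = ρ' a * ρ' b)
    (hρ_add : ∀ a ∈ B.commutant, ∀ b ∈ B.commutant, ρ' (a + b) = ρ' a + ρ' b)
    (hρ_smul : ∀ (c : ℂ), ∀ a ∈ B.commutant, ρ' (c • a) = c • ρ' a)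
    (hρ_star : ∀ a ∈ B.commutant, ρ' (star a) = star (ρ' a))
    (hρ_int : ∀ b' ∈ B.commutant, ∀ x ∈ E, ∀ g : G, ρ' b' (x g) = x (b' g))
    (Φ : ↥(intertwinerSubmodule (B.commutant : Set (G →L[ℂ] G)) ρ') →L[ℂ] (G →L[ℂ] G))
    (hΦB : ∀ x, Φ x ∈ B)
    (hΦmod : ∀ (x : G →L[ℂ] H)
      (hx : x ∈ intertwinerSubmodule (B.commutant : Set (G →L[ℂ] G)) ρ')
      (b : G →L[ℂ] G) (hb : b ∈ B)
      (hxb : x.comp b ∈ intertwinerSubmodule (B.commutant : Set (G →L[ℂ] G)) ρ'),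
      Φ ⟨x.comp b, hxb⟩ = (Φ ⟨x, hx⟩).comp b) :
    ∃ y ∈ intertwinerSubmodule (B.commutant : Set (G →L[ℂ] G)) ρ',
      ∀ (x : G →L[ℂ] H)
        (hx : x ∈ intertwinerSubmodule (B.commutant : Set (G →L[ℂ] G)) ρ'),
        Φ ⟨x, hx⟩ = (adjoint y).comp x := by
  classical
  have hBcomm : ∀ b : G →L[ℂ] G, b ∈ B → ∀ b' ∈ B.commutant, ∀ g : G, b (b' g) = b' (b g) := by
    intro b hb b' hb' g
    have h := VonNeumannAlgebra.mem_commutant_iff.mp hb' b hb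
    have := congrArg (fun T : G →L[ℂ] G => T g) h
    simpa [ContinuousLinearMap.mul_apply] using this
  have hmemB : ∀ w : G →L[ℂ] G, (∀ b' ∈ B.commutant, ∀ g, b' (w g) = w (b' g)) → w ∈ B := by
    intro w hw
    have hmem : w ∈ B.commutant.commutant := by
      rw [VonNeumannAlgebra.mem_commutant_iff]
      intro b' hb'
      ext g
      simpa [ContinuousLinearMap.mul_apply] using hw b' hb' g
    rwa [B.commutant_commutant] at hmem
  have hstarB : ∀ b : G →L[ℂ] G, b ∈ B → adjoint b ∈ B := by
    intro b hb
    rw [← ContinuousLinearMap.star_eq_adjoint]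
    exact star_mem hb
  have hstarComm : ∀ b' ∈ B.commutant, adjoint b' ∈ B.commutant := by
    intro b' hb'
    rw [← ContinuousLinearMap.star_eq_adjoint]
    exact star_mem hb'
  have hρadj : ∀ b' ∈ B.commutant, adjoint (ρ' b') = ρ' (adjoint b') := by
    intro b' hb'
    rw [← ContinuousLinearMap.star_eq_adjoint, ← ContinuousLinearMap.star_eq_adjoint,
      hρ_star b' hb']
  -- the approximants
  have key : ∀ (F : Finset ↥(intertwinerSubmodule (B.commutant : Set (G →L[ℂ] G)) ρ')) (ε : ℝ), 0 < ε →
      ∃ y : G →L[ℂ] H, y ∈ (intertwinerSubmodule (B.commutant : Set (G →L[ℂ] G)) ρ') ∧ ‖y‖ ≤ ‖Φ‖ ∧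
        ∀ x ∈ F, ∀ g g' : G,
          ‖⟪y g', (x : ↥(intertwinerSubmodule (B.commutant : Set (G →L[ℂ] G)) ρ')).1 g⟫ - ⟪g', Φ x g⟫‖ ≤ Real.sqrt ε * ‖Φ‖ * ‖g‖ * ‖g'‖ := by
    intro F ε hε
    obtain ⟨y, h1, h2, h3⟩ := approx_lemma (B.commutant : Set (G →L[ℂ] G)) ρ'
      (fun b => b ∈ B) hmemB hBcomm hstarB hstarComm hρadj Φ hΦB hΦmod
      (ι := {z : ↥(intertwinerSubmodule (B.commutant : Set (G →L[ℂ] G)) ρ') // z ∈ F}) (fun i => (i : ↥(intertwinerSubmodule (B.commutant : Set (G →L[ℂ] G)) ρ'))) ε hε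
    exact ⟨y, h1, h2, fun x hxF g g' => h3 ⟨x, hxF⟩ g g'⟩
  -- the directed limit
  let L : Filter (Finset ↥(intertwinerSubmodule (B.commutant : Set (G →L[ℂ] G)) ρ') × ℝ) :=
    (Filter.atTop : Filter (Finset ↥(intertwinerSubmodule (B.commutant : Set (G →L[ℂ] G)) ρ'))) ×ˢ (nhdsWithin 0 (Set.Ioi (0:ℝ)))
  haveI hLne : L.NeBot := by
    apply Filter.prod_neBot.mpr
    exact ⟨Filter.atTop_neBot, inferInstance⟩
  have hYex : ∀ p : Finset ↥(intertwinerSubmodule (B.commutant : Set (G →L[ℂ] G)) ρ') × ℝ, ∃ y : G →L[ℂ] H, y ∈ (intertwinerSubmodule (B.commutant : Set (G →L[ℂ] G)) ρ') ∧ ‖y‖ ≤ ‖Φ‖ ∧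
      (0 < p.2 → ∀ x ∈ p.1, ∀ g g' : G,
        ‖⟪y g', (x : ↥(intertwinerSubmodule (B.commutant : Set (G →L[ℂ] G)) ρ')).1 g⟫ - ⟪g', Φ x g⟫‖ ≤ Real.sqrt p.2 * ‖Φ‖ * ‖g‖ * ‖g'‖) := by
    intro p
    rcases lt_or_ge 0 p.2 with hp | hp
    · obtain ⟨y, h1, h2, h3⟩ := key p.1 p.2 hp
      exact ⟨y, h1, h2, fun _ => h3⟩
    · refine ⟨0, Submodule.zero_mem _, ?_, fun h0 => absurd h0 (not_lt.mpr hp)⟩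
      rw [norm_zero]
      exact ContinuousLinearMap.opNorm_nonneg Φ
  choose Y hY1 hY2 hY3 using hYex
  have htends : ∀ (x : ↥(intertwinerSubmodule (B.commutant : Set (G →L[ℂ] G)) ρ')) (g g' : G),
      Filter.Tendsto (fun p : Finset ↥(intertwinerSubmodule (B.commutant : Set (G →L[ℂ] G)) ρ') × ℝ => ⟪Y p g', x.1 g⟫) L (nhds ⟪g', Φ x g⟫) := by
    intro x g g'
    rw [tendsto_iff_dist_tendsto_zero]
    have hev : ∀ᶠ p : Finset ↥(intertwinerSubmodule (B.commutant : Set (G →L[ℂ] G)) ρ') × ℝ in L,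
        dist (⟪Y p g', x.1 g⟫) (⟪g', Φ x g⟫) ≤ Real.sqrt p.2 * ‖Φ‖ * ‖g‖ * ‖g'‖ := by
      have hs : {F : Finset ↥(intertwinerSubmodule (B.commutant : Set (G →L[ℂ] G)) ρ') | x ∈ F} ∈ (Filter.atTop : Filter (Finset ↥(intertwinerSubmodule (B.commutant : Set (G →L[ℂ] G)) ρ'))) :=
        Filter.mem_atTop_sets.mpr ⟨{x}, fun F hF => Finset.singleton_subset_iff.mp hF⟩
      have ht : Set.Ioi (0:ℝ) ∈ nhdsWithin 0 (Set.Ioi (0:ℝ)) := self_mem_nhdsWithin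
      refine Filter.mem_of_superset (Filter.prod_mem_prod hs ht) ?_
      rintro ⟨F, δ⟩ ⟨hF, hδ⟩
      simp only [Set.mem_setOf_eq]
      rw [dist_eq_norm]
      exact hY3 (F, δ) hδ x hF g g'
    refine squeeze_zero' (Filter.Eventually.of_forall fun p => dist_nonneg) hev ?_
    have h1 : Filter.Tendsto (fun p : Finset ↥(intertwinerSubmodule (B.commutant : Set (G →L[ℂ] G)) ρ') × ℝ => p.2) L (nhdsWithin 0 (Set.Ioi 0)) :=
      Filter.tendsto_snd
    have h2 : Filter.Tendsto (fun p : Finset ↥(intertwinerSubmodule (B.commutant : Set (G →L[ℂ] G)) ρ') × ℝ => Real.sqrt p.2) L (nhds 0) := by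
      have h3 := (Real.continuous_sqrt.tendsto 0).comp (h1.mono_right nhdsWithin_le_nhds)
      simpa [Function.comp_def] using h3
    have h4 := ((h2.mul_const ‖Φ‖).mul_const ‖g‖).mul_const ‖g'‖
    simpa using h4
  let U : Ultrafilter (Finset ↥(intertwinerSubmodule (B.commutant : Set (G →L[ℂ] G)) ρ') × ℝ) := Ultrafilter.of L
  have hUL : (U : Filter (Finset ↥(intertwinerSubmodule (B.commutant : Set (G →L[ℂ] G)) ρ') × ℝ)) ≤ L := Ultrafilter.of_le L
  have hbound : ∀ (g' : G) (h : H) (p : Finset ↥(intertwinerSubmodule (B.commutant : Set (G →L[ℂ] G)) ρ') × ℝ),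
      ⟪Y p g', h⟫ ∈ Metric.closedBall (0:ℂ) (‖Φ‖ * ‖g'‖ * ‖h‖) := by
    intro g' h p
    rw [Metric.mem_closedBall, dist_zero_right]
    calc ‖⟪Y p g', h⟫‖ ≤ ‖Y p g'‖ * ‖h‖ := norm_inner_le_norm _ _
      _ ≤ (‖Φ‖ * ‖g'‖) * ‖h‖ := by
          refine mul_le_mul_of_nonneg_right ?_ (norm_nonneg h)
          calc ‖Y p g'‖ ≤ ‖Y p‖ * ‖g'‖ := (Y p).le_opNorm g'
            _ ≤ ‖Φ‖ * ‖g'‖ := mul_le_mul_of_nonneg_right (hY2 p) (norm_nonneg g')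
      _ = ‖Φ‖ * ‖g'‖ * ‖h‖ := by ring
  have hlim : ∀ (g' : G) (h : H), ∃ z : ℂ,
      Filter.Tendsto (fun p : Finset ↥(intertwinerSubmodule (B.commutant : Set (G →L[ℂ] G)) ρ') × ℝ => ⟪Y p g', h⟫) (U : Filter (Finset ↥(intertwinerSubmodule (B.commutant : Set (G →L[ℂ] G)) ρ') × ℝ))
        (nhds z) ∧ ‖z‖ ≤ ‖Φ‖ * ‖g'‖ * ‖h‖ := by
    intro g' h
    obtain ⟨z, hz1, hz2⟩ := (isCompact_closedBall (0:ℂ) (‖Φ‖ * ‖g'‖ * ‖h‖)).ultrafilter_le_nhds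
      (U.map (fun p : Finset ↥(intertwinerSubmodule (B.commutant : Set (G →L[ℂ] G)) ρ') × ℝ => ⟪Y p g', h⟫)) (by
        rw [Ultrafilter.coe_map, Filter.le_principal_iff, Filter.mem_map]
        exact Filter.univ_mem' (fun p => hbound g' h p))
    refine ⟨z, ?_, mem_closedBall_zero_iff.mp hz1⟩
    rw [Filter.Tendsto, ← Ultrafilter.coe_map]
    exact hz2
  choose ℓ hℓt hℓn using hlim
  have hadd : ∀ g' h₁ h₂, ℓ g' (h₁ + h₂) = ℓ g' h₁ + ℓ g' h₂ := by
    intro g' h₁ h₂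
    have t1 := (hℓt g' h₁).add (hℓt g' h₂)
    have t2 : (fun p : Finset ↥(intertwinerSubmodule (B.commutant : Set (G →L[ℂ] G)) ρ') × ℝ => ⟪Y p g', h₁⟫ + ⟪Y p g', h₂⟫)
        = fun p => ⟪Y p g', h₁ + h₂⟫ := by
      funext p; rw [← inner_add_right]
    rw [t2] at t1
    exact tendsto_nhds_unique (hℓt g' (h₁ + h₂)) t1
  have hsmul : ∀ g' (a : ℂ) h, ℓ g' (a • h) = a * ℓ g' h := by
    intro g' a h
    have t1 := (hℓt g' h).const_mul a
    have t2 : (fun p : Finset ↥(intertwinerSubmodule (B.commutant : Set (G →L[ℂ] G)) ρ') × ℝ => a * ⟪Y p g', h⟫) = fun p => ⟪Y p g', a • h⟫ := by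
      funext p; rw [← inner_smul_right]
    rw [t2] at t1
    exact tendsto_nhds_unique (hℓt g' (a • h)) t1
  let flin : G → (H →L[ℂ] ℂ) := fun g' => LinearMap.mkContinuous
    { toFun := ℓ g', map_add' := hadd g',
      map_smul' := fun a h => by simpa [smul_eq_mul] using hsmul g' a h } (‖Φ‖ * ‖g'‖)
    (fun h => hℓn g' h)
  let v : G → H := fun g' => (InnerProductSpace.toDual ℂ H).symm (flin g')
  have hv : ∀ g' h, ⟪v g', h⟫ = ℓ g' h := fun g' h => InnerProductSpace.toDual_symm_apply
  have hvt : ∀ g' h, Filter.Tendsto (fun p : Finset ↥(intertwinerSubmodule (B.commutant : Set (G →L[ℂ] G)) ρ') × ℝ => ⟪Y p g', h⟫)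
      (U : Filter (Finset ↥(intertwinerSubmodule (B.commutant : Set (G →L[ℂ] G)) ρ') × ℝ)) (nhds ⟪v g', h⟫) := by
    intro g' h; rw [hv]; exact hℓt g' h
  have hv_add : ∀ g₁ g₂, v (g₁ + g₂) = v g₁ + v g₂ := by
    intro g₁ g₂
    apply ext_inner_right ℂ
    intro h
    have t1 := (hvt g₁ h).add (hvt g₂ h)
    have t2 : (fun p : Finset ↥(intertwinerSubmodule (B.commutant : Set (G →L[ℂ] G)) ρ') × ℝ => ⟪Y p g₁, h⟫ + ⟪Y p g₂, h⟫)
        = fun p => ⟪Y p (g₁ + g₂), h⟫ := by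
      funext p; rw [← inner_add_left, ← map_add]
    rw [t2] at t1
    have t3 := tendsto_nhds_unique (hvt (g₁ + g₂) h) t1
    rw [inner_add_left]
    exact t3
  have hv_smul : ∀ (a : ℂ) g', v (a • g') = a • v g' := by
    intro a g'
    apply ext_inner_right ℂ
    intro h
    have t1 := (hvt g' h).const_mul (starRingEnd ℂ a)
    have t2 : (fun p : Finset ↥(intertwinerSubmodule (B.commutant : Set (G →L[ℂ] G)) ρ') × ℝ => (starRingEnd ℂ a) * ⟪Y p g', h⟫)
        = fun p => ⟪Y p (a • g'), h⟫ := by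
      funext p; rw [← inner_smul_left, ← map_smul]
    rw [t2] at t1
    have t3 := tendsto_nhds_unique (hvt (a • g') h) t1
    rw [inner_smul_left]
    exact t3
  have hv_bound : ∀ g', ‖v g'‖ ≤ ‖Φ‖ * ‖g'‖ := by
    intro g'
    have h1 : ‖v g'‖ = ‖flin g'‖ := (InnerProductSpace.toDual ℂ H).symm.norm_map (flin g')
    rw [h1]
    exact LinearMap.mkContinuous_norm_le _ (by positivity) _
  let yfin : G →L[ℂ] H := LinearMap.mkContinuous
    { toFun := v, map_add' := hv_add,
      map_smul' := fun a g' => by simpa using hv_smul a g' } ‖Φ‖ (fun g' => hv_bound g')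
  have hyt : ∀ g' h, Filter.Tendsto (fun p : Finset ↥(intertwinerSubmodule (B.commutant : Set (G →L[ℂ] G)) ρ') × ℝ => ⟪Y p g', h⟫)
      (U : Filter (Finset ↥(intertwinerSubmodule (B.commutant : Set (G →L[ℂ] G)) ρ') × ℝ)) (nhds ⟪yfin g', h⟫) := hvt
  have hkey : ∀ (x : ↥(intertwinerSubmodule (B.commutant : Set (G →L[ℂ] G)) ρ')) (g g' : G), ⟪yfin g', x.1 g⟫ = ⟪g', Φ x g⟫ := by
    intro x g g'
    exact tendsto_nhds_unique (hyt g' (x.1 g)) ((htends x g g').mono_left hUL)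
  have hyfinC : yfin ∈ (intertwinerSubmodule (B.commutant : Set (G →L[ℂ] G)) ρ') := by
    intro b' hb'
    ext g'
    show ρ' b' (yfin g') = yfin (b' g')
    apply ext_inner_right ℂ
    intro h
    have e1 : ∀ p : Finset ↥(intertwinerSubmodule (B.commutant : Set (G →L[ℂ] G)) ρ') × ℝ, ⟪Y p g', adjoint (ρ' b') h⟫ = ⟪Y p (b' g'), h⟫ := by
      intro p
      rw [adjoint_inner_right]
      congr 1
      have := congrArg (fun T : G →L[ℂ] H => T g') (hY1 p b' hb')
      simpa [ContinuousLinearMap.comp_apply] using this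
    have t1 := hyt g' (adjoint (ρ' b') h)
    rw [show (fun p : Finset ↥(intertwinerSubmodule (B.commutant : Set (G →L[ℂ] G)) ρ') × ℝ => ⟪Y p g', adjoint (ρ' b') h⟫)
        = fun p => ⟪Y p (b' g'), h⟫ from funext e1] at t1
    have t3 := tendsto_nhds_unique (hyt (b' g') h) t1
    calc ⟪ρ' b' (yfin g'), h⟫ = ⟪yfin g', adjoint (ρ' b') h⟫ :=
          (adjoint_inner_right _ _ _).symm
      _ = ⟪yfin (b' g'), h⟫ := t3.symm
  refine ⟨yfin, hyfinC, ?_⟩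
  intro x hx
  ext g
  apply ext_inner_left ℂ
  intro g'
  rw [ContinuousLinearMap.comp_apply, adjoint_inner_right]
  exact (hkey ⟨x, hx⟩ g g').symm
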